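/- For every real number x with |x| < 1/4, the generating function identity Σ_{n=1}^{∞} f_n x^n = (1 − √(1 − 4x))/2 holds, where f_n = (1/n)·binom(2n−2, n−1) (the (n−1)-st Catalan number); i.e., the series Σ_{n≥1} (catalan (n−1)) · x^n is summable with sum (1 − Real.sqrt (1 − 4x))/2. -/

import Mathlib

open Finset

lemma catalan_le_four_pow (n : ℕ) : catalan n ≤ 4 ^ n := by
  have h1 : catalan n ≤ n.centralBinom := by
    have := succ_mul_catalan_eq_centralBinom n
    nlinarith [Nat.le_of_eq this.symm]
  have h2 : n.centralBinom ≤ 4 ^ n := by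
    have : (2 * n).choose n ≤ ∑ k ∈ range (2 * n + 1), (2 * n).choose k :=
      Finset.single_le_sum (fun i _ => Nat.zero_le _) (by simp [Nat.lt_succ_iff]; omega)
    rw [Nat.sum_range_choose] at this
    calc n.centralBinom = (2 * n).choose n := rfl
      _ ≤ 2 ^ (2 * n) := this
      _ = 4 ^ n := by rw [pow_mul]; norm_num
  exact h1.trans h2

lemma cat_summable_norm {t : ℝ} (ht : |t| < 1 / 4) :
    Summable (fun n : ℕ => ‖(catalan n : ℝ) * t ^ (n + 1)‖) := by
  have hgeo : Summable (fun n : ℕ => |t| * (4 * |t|) ^ n) := by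
    apply Summable.mul_left
    apply summable_geometric_of_lt_one (by positivity)
    nlinarith [abs_nonneg t]
  apply Summable.of_nonneg_of_le (fun n => norm_nonneg _) _ hgeo
  intro n
  have hc : (catalan n : ℝ) ≤ (4 : ℝ) ^ n := by exact_mod_cast catalan_le_four_pow n
  have : ‖(catalan n : ℝ) * t ^ (n + 1)‖ = (catalan n : ℝ) * |t| ^ (n + 1) := by
    rw [norm_mul, norm_pow, Real.norm_eq_abs, Real.norm_eq_abs, Nat.abs_cast]
  rw [this]
  calc (catalan n : ℝ) * |t| ^ (n + 1) ≤ (4 : ℝ) ^ n * |t| ^ (n + 1) := by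
        apply mul_le_mul_of_nonneg_right hc (pow_nonneg (abs_nonneg t) _)
    _ = |t| * (4 * |t|) ^ n := by rw [mul_pow, pow_succ]; ring

lemma cat_summable {t : ℝ} (ht : |t| < 1 / 4) :
    Summable (fun n : ℕ => (catalan n : ℝ) * t ^ (n + 1)) :=
  (cat_summable_norm ht).of_norm

noncomputable def catSum (t : ℝ) : ℝ := ∑' n : ℕ, (catalan n : ℝ) * t ^ (n + 1)

lemma catSum_quadratic {t : ℝ} (ht : |t| < 1 / 4) :
    catSum t = t + catSum t ^ 2 := by
  have hn := cat_summable_norm ht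
  have hs := cat_summable ht
  have cauchy := tsum_mul_tsum_eq_tsum_sum_antidiagonal_of_summable_norm hn hn
  have key : catSum t ^ 2 = ∑' n : ℕ, (catalan (n + 1) : ℝ) * t ^ (n + 2) := by
    rw [sq, catSum, cauchy]
    congr 1
    ext n
    rw [catalan_succ']
    push_cast
    rw [Finset.sum_mul]
    apply Finset.sum_congr rfl
    intro ij hij
    have := Finset.HasAntidiagonal.mem_antidiagonal.mp hij
    rw [← this]
    ring
  have shift : HasSum (fun n : ℕ => (catalan (n + 1) : ℝ) * t ^ (n + 2)) (catSum t - t) := by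
    have h0 : HasSum (fun n : ℕ => (catalan n : ℝ) * t ^ (n + 1)) (catSum t) := hs.hasSum
    have h1 := (hasSum_nat_add_iff' (f := fun n : ℕ => (catalan n : ℝ) * t ^ (n + 1))
      (g := catSum t) 1).mpr h0
    convert h1 using 2 with n
    case e'_3 => rfl
    case e'_6 => simp
  rw [key, shift.tsum_eq]
  ring

lemma catSum_continuousOn {y : ℝ} (hy0 : 0 ≤ y) (hy : y < 1 / 4) :
    ContinuousOn catSum (Set.Icc 0 y) := by
  have hys : Summable (fun n : ℕ => (catalan n : ℝ) * y ^ (n + 1)) :=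
    cat_summable (by rwa [abs_of_nonneg hy0])
  apply continuousOn_tsum (u := fun n => (catalan n : ℝ) * y ^ (n + 1))
    (fun i => (continuous_const.mul (continuous_pow _)).continuousOn) hys
  intro n t ht
  obtain ⟨ht0, hty⟩ := ht
  simp only [Pi.mul_apply]
  rw [norm_mul, norm_pow, Real.norm_eq_abs, Real.norm_eq_abs, Nat.abs_cast,
    abs_of_nonneg ht0]
  have : (0:ℝ) ≤ (catalan n : ℝ) := by positivity
  exact mul_le_mul_of_nonneg_left (pow_le_pow_left₀ ht0 hty _) this

lemma catSum_lt_half {y : ℝ} (hy0 : 0 ≤ y) (hy : y < 1 / 4) : catSum y < 1 / 2 := by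
  by_contra h
  push_neg at h
  have h0 : catSum 0 = 0 := by simp [catSum]
  have ivt := intermediate_value_Icc hy0 (catSum_continuousOn hy0 hy)
  have hmem : (1 / 2 : ℝ) ∈ Set.Icc (catSum 0) (catSum y) := by
    constructor
    · rw [h0]; norm_num
    · exact h
  obtain ⟨t, ht, h2⟩ := ivt hmem
  obtain ⟨ht0, hty⟩ := ht
  have htlt : |t| < 1 / 4 := by rw [abs_of_nonneg ht0]; linarith
  have hq := catSum_quadratic htlt
  rw [h2] at hq
  norm_num at hq
  linarith

theorem catalan_generating_function (x : ℝ) (hx : |x| < 1 / 4) :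
    HasSum (fun n : ℕ => (catalan n : ℝ) * x ^ (n + 1))
      ((1 - Real.sqrt (1 - 4 * x)) / 2) := by
  have hs := cat_summable hx
  set s := catSum x with hsdef
  have habs : |x| < 1 / 4 := hx
  have hbound : s ≤ catSum |x| := by
    calc s ≤ |s| := le_abs_self s
      _ = ‖∑' n : ℕ, (catalan n : ℝ) * x ^ (n + 1)‖ := rfl
      _ ≤ ∑' n : ℕ, ‖(catalan n : ℝ) * x ^ (n + 1)‖ := norm_tsum_le_tsum_norm (cat_summable_norm hx)
      _ = catSum |x| := by
          unfold catSum
          congr 1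
          ext n
          rw [norm_mul, norm_pow, Real.norm_eq_abs, Real.norm_eq_abs, Nat.abs_cast]
  have hhalf : s < 1 / 2 := lt_of_le_of_lt hbound (catSum_lt_half (abs_nonneg x) hx)
  have hq := catSum_quadratic hx
  rw [← hsdef] at hq
  have hsq : (1 - 2 * s) ^ 2 = 1 - 4 * x := by nlinarith
  have hsqrt : Real.sqrt (1 - 4 * x) = 1 - 2 * s := by
    rw [← hsq, Real.sqrt_sq (by linarith)]
  have : (1 - Real.sqrt (1 - 4 * x)) / 2 = s := by rw [hsqrt]; ring
  rw [this]
  exact hs.hasSum
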